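/- arXiv:2204.04015 — 4 statements merged into one kernel-verified Lean document; each statement's English description precedes it below -/
import Mathlib

section
/- For all real α, β > −1 with α+β+1 > 0, every integer n ≥ 0, and every real t, one has Σ_{k=0}^{n} ((2k+α+β+1)/(α+β+1)) · ((α+β+1)_k/(β+1)_k) · P_k^{(α,β)}(t) = ((α+β+2)_n/(β+1)_n) · P_n^{(α+1,β)}(t). -/
open Finset

/-- The Pochhammer symbol `(x)_n = x (x+1) ⋯ (x+n-1)`. -/
noncomputable def poch (x : ℝ) (n : ℕ) : ℝ := (ascPochhammer ℝ n).eval x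

/-- The Jacobi polynomial `P_n^{(α,β)}`, via its standard explicit expansion
(equivalent to Rodrigues' formula). -/
noncomputable def jacobiP (α β : ℝ) (n : ℕ) (t : ℝ) : ℝ :=
  ∑ k ∈ Finset.range (n + 1),
    poch (α + k + 1) (n - k) / ((n - k).factorial : ℝ) *
      (poch (β + (n - k) + 1) k / (k.factorial : ℝ)) *
      ((t - 1) / 2) ^ k * ((t + 1) / 2) ^ (n - k)

set_option maxHeartbeats 1000000

lemma poch_zero (x : ℝ) : poch x 0 = 1 := by simp [poch]

lemma poch_succ (x : ℝ) (n : ℕ) : poch x (n+1) = poch x n * (x + n) :=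
  ascPochhammer_succ_eval n x

lemma poch_succ_left (x : ℝ) (n : ℕ) : poch x (n+1) = x * poch (x+1) n := by
  simp [poch, ascPochhammer_succ_left, Polynomial.eval_comp]

lemma poch_pos {x : ℝ} (hx : 0 < x) (n : ℕ) : 0 < poch x n := by
  induction n with
  | zero => simp [poch_zero]
  | succ n ih => rw [poch_succ]; positivity


noncomputable def F (α β : ℝ) (k m : ℕ) : ℝ :=
  poch (α + k + 1) m / (m.factorial : ℝ) * (poch (β + m + 1) k / (k.factorial : ℝ))

lemma coeff_mid (α β : ℝ) (k m : ℕ) :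
    (α+β+2*((k:ℝ)+(m:ℝ)+2)+1) * F α β (k+1) (m+1)
      = (α+β+((k:ℝ)+(m:ℝ)+2)+1) * F (α+1) β (k+1) (m+1)
        - (β+((k:ℝ)+(m:ℝ)+2)) * (F (α+1) β (k+1) m - F (α+1) β k (m+1)) := by
  have h1 : poch (α + (k+1:ℕ) + 1) (m+1) = (α+k+2) * poch (α+(k:ℝ)+3) m := by
    push_cast
    rw [show α+((k:ℝ)+1)+1 = (α+(k:ℝ)+2) by ring, poch_succ_left]
    ring_nf
  have h2 : poch (α+1 + (k+1:ℕ) + 1) (m+1) = poch (α+(k:ℝ)+3) m * (α+(k:ℝ)+3+m) := by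
    push_cast
    rw [show α+1+((k:ℝ)+1)+1 = (α+(k:ℝ)+3) by ring, poch_succ]
  have h3 : poch (β + (m+1:ℕ) + 1) (k+1) = poch (β+(m:ℝ)+2) k * (β+(m:ℝ)+2+k) := by
    push_cast
    rw [show β+((m:ℝ)+1)+1 = (β+(m:ℝ)+2) by ring, poch_succ]
  have h4 : poch (β + (m:ℕ) + 1) (k+1) = (β+(m:ℝ)+1) * poch (β+(m:ℝ)+2) k := by
    rw [poch_succ_left]; ring_nf
  have h5 : poch (α+1 + (k+1:ℕ) + 1) m = poch (α+(k:ℝ)+3) m := by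
    push_cast; ring_nf
  have h6 : poch (α+1 + (k:ℕ) + 1) (m+1) = (α+(k:ℝ)+2) * poch (α+(k:ℝ)+3) m := by
    rw [show α+1+(k:ℝ)+1 = (α+(k:ℝ)+2) by ring, poch_succ_left]
    ring_nf
  have h7 : poch (β + (m+1:ℕ) + 1) k = poch (β+(m:ℝ)+2) k := by
    push_cast
    rw [show β+((m:ℝ)+1)+1 = (β+(m:ℝ)+2) by ring]
  have hm : ((m+1).factorial : ℝ) = (m+1) * m.factorial := by
    rw [Nat.factorial_succ]; push_cast; ring
  have hk : ((k+1).factorial : ℝ) = (k+1) * k.factorial := by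
    rw [Nat.factorial_succ]; push_cast; ring
  have hmf : (m.factorial : ℝ) ≠ 0 := Nat.cast_ne_zero.2 m.factorial_ne_zero
  have hkf : (k.factorial : ℝ) ≠ 0 := Nat.cast_ne_zero.2 k.factorial_ne_zero
  have hm1 : ((m:ℝ)+1) ≠ 0 := by positivity
  have hk1 : ((k:ℝ)+1) ≠ 0 := by positivity
  unfold F
  rw [h1, h2, h3, h4, h5, h6, h7, hm, hk]
  field_simp
  ring

lemma coeff_left (α β : ℝ) (m : ℕ) :
    (α+β+2*((m:ℝ)+1)+1) * F α β 0 (m+1)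
      = (α+β+((m:ℝ)+1)+1) * F (α+1) β 0 (m+1) - (β+((m:ℝ)+1)) * F (α+1) β 0 m := by
  have h1 : poch (α + (0:ℕ) + 1) (m+1) = (α+1) * poch (α+2) m := by
    rw [show α+(0:ℕ)+1 = α+1 by push_cast; ring, poch_succ_left]; ring_nf
  have h2 : poch (α+1 + (0:ℕ) + 1) (m+1) = poch (α+2) m * (α+2+m) := by
    rw [show α+1+(0:ℕ)+1 = α+2 by push_cast; ring, poch_succ]
  have h3 : poch (α+1 + (0:ℕ) + 1) m = poch (α+2) m := by
    norm_num; ring_nf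
  have hm : ((m+1).factorial : ℝ) = (m+1) * m.factorial := by
    rw [Nat.factorial_succ]; push_cast; ring
  have hmf : (m.factorial : ℝ) ≠ 0 := Nat.cast_ne_zero.2 m.factorial_ne_zero
  have hm1 : ((m:ℝ)+1) ≠ 0 := by positivity
  unfold F
  rw [h1, h2, h3, hm]
  simp only [poch_zero, Nat.factorial_zero]
  field_simp
  ring

lemma coeff_right (α β : ℝ) (k : ℕ) :
    (α+β+((k:ℝ)+1)+1) * F (α+1) β (k+1) 0 - (α+β+2*((k:ℝ)+1)+1) * F α β (k+1) 0
      = -((β+((k:ℝ)+1)) * F (α+1) β k 0) := by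
  have h3 : poch (β + (0:ℕ) + 1) (k+1) = poch (β+1) k * (β+1+k) := by
    rw [show β+(0:ℕ)+1 = β+1 by push_cast; ring, poch_succ]
  have h4 : poch (β + (0:ℕ) + 1) k = poch (β+1) k := by norm_num
  have hk : ((k+1).factorial : ℝ) = (k+1) * k.factorial := by
    rw [Nat.factorial_succ]; push_cast; ring
  have hkf : (k.factorial : ℝ) ≠ 0 := Nat.cast_ne_zero.2 k.factorial_ne_zero
  have hk1 : ((k:ℝ)+1) ≠ 0 := by positivity
  unfold F
  rw [h3, h4, hk]
  simp only [poch_zero, Nat.factorial_zero]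
  field_simp
  ring

noncomputable def Dk (α β : ℝ) (n : ℕ) (u : ℝ) (k : ℕ) : ℝ :=
  (α+β+((n:ℝ)+1)+1) * (F (α+1) β k (n+1-k) * u^k * (u+1)^(n+1-k))
  - (α+β+2*((n:ℝ)+1)+1) * (F α β k (n+1-k) * u^k * (u+1)^(n+1-k))

noncomputable def Ak (α β : ℝ) (n : ℕ) (u : ℝ) (k : ℕ) : ℝ :=
  (β+((n:ℝ)+1)) * (F (α+1) β k (n-k) * u^k * (u+1)^(n+1-k))

noncomputable def Bk (α β : ℝ) (n : ℕ) (u : ℝ) (k : ℕ) : ℝ :=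
  (β+((n:ℝ)+1)) * (F (α+1) β k (n-k) * u^(k+1) * (u+1)^(n-k))

lemma Dk_mid (α β : ℝ) (n : ℕ) (u : ℝ) : ∀ j ∈ Finset.range n,
    Dk α β n u (j+1) = Ak α β n u (j+1) - Bk α β n u j := by
  intro j hj
  rw [Finset.mem_range] at hj
  obtain ⟨m, rfl⟩ : ∃ m, n = j + 1 + m := ⟨n - (j+1), by omega⟩
  unfold Dk Ak Bk
  rw [show j+1+m+1 - (j+1) = m+1 from by omega, show j+1+m - (j+1) = m from by omega,
      show j+1+m - j = m+1 from by omega]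
  have hcm := coeff_mid α β j m
  push_cast
  linear_combination (-(u^(j+1) * (u+1)^(m+1))) * hcm

lemma Dk_zero (α β : ℝ) (n : ℕ) (u : ℝ) : Dk α β n u 0 = Ak α β n u 0 := by
  unfold Dk Ak
  simp only [Nat.sub_zero, pow_zero]
  linear_combination (-((u+1)^(n+1))) * coeff_left α β n

lemma Dk_top (α β : ℝ) (n : ℕ) (u : ℝ) : Dk α β n u (n+1) = -(Bk α β n u n) := by
  unfold Dk Bk
  rw [show n+1 - (n+1) = 0 from by omega, show n - n = 0 from by omega]
  simp only [pow_zero]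
  linear_combination (u^(n+1)) * coeff_right α β n

lemma AB (α β : ℝ) (n : ℕ) (u : ℝ) : ∀ k ∈ Finset.range (n+1),
    Ak α β n u k - Bk α β n u k
      = (β+((n:ℝ)+1)) * (F (α+1) β k (n-k) * u^k * (u+1)^(n-k)) := by
  intro k hk
  rw [Finset.mem_range] at hk
  unfold Ak Bk
  rw [show n+1-k = (n-k)+1 from by omega, pow_succ, pow_succ]
  ring

lemma contig_sum (α β : ℝ) (n : ℕ) (u : ℝ) :
    (α+β+2*((n:ℝ)+1)+1) * ∑ k ∈ Finset.range (n+1+1), F α β k (n+1-k) * u^k * (u+1)^(n+1-k)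
      = (α+β+((n:ℝ)+1)+1) * ∑ k ∈ Finset.range (n+1+1), F (α+1) β k (n+1-k) * u^k * (u+1)^(n+1-k)
        - (β+((n:ℝ)+1)) * ∑ k ∈ Finset.range (n+1), F (α+1) β k (n-k) * u^k * (u+1)^(n-k) := by
  have main : ∑ k ∈ Finset.range (n+1+1), Dk α β n u k
      = ∑ k ∈ Finset.range (n+1), Ak α β n u k - ∑ k ∈ Finset.range (n+1), Bk α β n u k := by
    rw [Finset.sum_range_succ' (Dk α β n u) (n+1),
        Finset.sum_range_succ (fun i => Dk α β n u (i+1)) n,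
        Finset.sum_congr rfl (Dk_mid α β n u),
        Finset.sum_sub_distrib, Dk_zero, Dk_top,
        Finset.sum_range_succ' (Ak α β n u) n,
        Finset.sum_range_succ (Bk α β n u) n]
    ring
  have hD : ∑ k ∈ Finset.range (n+1+1), Dk α β n u k
      = (α+β+((n:ℝ)+1)+1) * ∑ k ∈ Finset.range (n+1+1), F (α+1) β k (n+1-k) * u^k * (u+1)^(n+1-k)
        - (α+β+2*((n:ℝ)+1)+1) * ∑ k ∈ Finset.range (n+1+1), F α β k (n+1-k) * u^k * (u+1)^(n+1-k) := by
    unfold Dk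
    rw [Finset.sum_sub_distrib, Finset.mul_sum, Finset.mul_sum]
  have hAB : ∑ k ∈ Finset.range (n+1), Ak α β n u k - ∑ k ∈ Finset.range (n+1), Bk α β n u k
      = (β+((n:ℝ)+1)) * ∑ k ∈ Finset.range (n+1), F (α+1) β k (n-k) * u^k * (u+1)^(n-k) := by
    rw [← Finset.sum_sub_distrib, Finset.sum_congr rfl (AB α β n u), Finset.mul_sum]
  rw [hD, hAB] at main
  linarith [main]

lemma jacobiP_as (α β : ℝ) (n : ℕ) (t : ℝ) :
    jacobiP α β n t
      = ∑ k ∈ Finset.range (n+1), F α β k (n-k) * ((t-1)/2)^k * ((t-1)/2+1)^(n-k) := by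
  unfold jacobiP F
  refine Finset.sum_congr rfl fun k hk => ?_
  rw [Finset.mem_range] at hk
  rw [show (t-1)/2+1 = (t+1)/2 from by ring, ← Nat.cast_sub (by omega : k ≤ n)]

lemma jacobiP_contig (α β : ℝ) (n : ℕ) (t : ℝ) :
    (α+β+2*((n:ℝ)+1)+1) * jacobiP α β (n+1) t
      = (α+β+((n:ℝ)+1)+1) * jacobiP (α+1) β (n+1) t
        - (β+((n:ℝ)+1)) * jacobiP (α+1) β n t := by
  rw [jacobiP_as, jacobiP_as, jacobiP_as]
  exact contig_sum α β n ((t-1)/2)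

lemma jacobiP_zero (α β : ℝ) (t : ℝ) : jacobiP α β 0 t = 1 := by
  simp [jacobiP, poch_zero]

/-- Summation formula for Jacobi polynomials. -/
theorem stmt0 (α β : ℝ) (hα : -1 < α) (hβ : -1 < β) (h : 0 < α + β + 1) (n : ℕ) (t : ℝ) :
    ∑ k ∈ Finset.range (n + 1),
      (2 * (k : ℝ) + α + β + 1) / (α + β + 1) * (poch (α + β + 1) k / poch (β + 1) k) *
        jacobiP α β k t
      = poch (α + β + 2) n / poch (β + 1) n * jacobiP (α + 1) β n t := by
  have h0 : α + β + 1 ≠ 0 := ne_of_gt h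
  induction n with
  | zero =>
    norm_num [Finset.sum_range_one, poch_zero, jacobiP_zero]
    field_simp
    exact h0
  | succ n ih =>
    have hn0 : (0:ℝ) ≤ (n:ℝ) := Nat.cast_nonneg n
    have h1 : (0:ℝ) < β + 1 := by linarith
    have hR : (0:ℝ) < poch (β+1) n := poch_pos h1 n
    have hc1 : (0:ℝ) < α+β+2*((n:ℝ)+1)+1 := by linarith
    have hb1 : (0:ℝ) < β+1+(n:ℝ) := by linarith
    have hc := jacobiP_contig α β n t
    have hjp : jacobiP α β (n+1) t
        = ((α+β+((n:ℝ)+1)+1) * jacobiP (α+1) β (n+1) t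
            - (β+((n:ℝ)+1)) * jacobiP (α+1) β n t) / (α+β+2*((n:ℝ)+1)+1) := by
      rw [eq_div_iff hc1.ne']
      linarith [hc]
    rw [Finset.sum_range_succ, ih, hjp, poch_succ (β+1) n, poch_succ (α+β+2) n,
        poch_succ_left (α+β+1) n, show α+β+1+1 = α+β+2 from by ring]
    push_cast
    field_simp
    ring
end

section
/- For every real η > 0, one has ∫_0^1 (1 − (1+z)^{−η}) (1+z^η)/z dz = ψ(η+1) + γ, where ψ is the digamma function and γ the Euler–Mascheroni constant. -/
open Real MeasureTheory Set Filter Topology intervalIntegral Nat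

local notation "γ" => Real.eulerMascheroniConstant




lemma digamma_series (x : ℝ) (hx : 1 < x) :
    deriv Real.Gamma x / Real.Gamma x + γ
      = ∑' k : ℕ, (1 / ((k:ℝ) + 1) - 1 / (k + x)) := by
  have hx0 : (0:ℝ) < x := by linarith
  set f : ℝ → ℝ := Real.log ∘ Real.Gamma with hf
  have hder : ∀ {y : ℝ}, 0 < y → DifferentiableAt ℝ f y := fun {y} hy => by
    refine ((Real.differentiableAt_Gamma ?_).log (Real.Gamma_ne_zero ?_)) <;>
      exact fun m ↦ ne_of_gt (lt_of_le_of_lt (by simp [Nat.cast_nonneg] : -(m:ℝ) ≤ 0) hy)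
  have hc : ConvexOn ℝ (Ioi 0) f := Real.convexOn_log_Gamma
  have h_rec : ∀ y : ℝ, 0 < y → f (y + 1) = f y + Real.log y := fun y hy => by
    simp only [f, Function.comp_apply, Real.Gamma_add_one hy.ne',
      Real.log_mul hy.ne' (Real.Gamma_pos_of_pos hy).ne', add_comm]
  have hder_rec : ∀ {y : ℝ}, 0 < y → deriv f (y + 1) = deriv f y + 1 / y := fun {y} hy => by
    rw [← deriv_comp_add_const, one_div, ← Real.deriv_log,
      ← deriv_add (hder <| by positivity) (Real.differentiableAt_log hy.ne')]
    apply Filter.EventuallyEq.deriv_eq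
    filter_upwards [eventually_gt_nhds hy] using h_rec
  have derivf_eq : ∀ {y : ℝ}, 0 < y → deriv f y = deriv Real.Gamma y / Real.Gamma y := by
    intro y hy
    rw [hf, Function.comp_def, deriv.log (Real.differentiableAt_Gamma
      (fun m ↦ ne_of_gt (lt_of_le_of_lt (by simp [Nat.cast_nonneg] : -(m:ℝ) ≤ 0) hy)))
      (Real.Gamma_pos_of_pos hy).ne']
  have hsum_rec : ∀ n : ℕ, deriv f (x + n) = deriv f x + ∑ k ∈ Finset.range n, 1 / (x + k) := by
    intro n
    induction n with
    | zero => simp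
    | succ n ih =>
      have : x + (n + 1 : ℕ) = (x + n) + 1 := by push_cast; ring
      rw [this, hder_rec (by positivity), ih, Finset.sum_range_succ]
      ring
  have dfn : ∀ n : ℕ, deriv f ((n:ℝ) + 1) = -γ + harmonic n := by
    intro n
    rw [derivf_eq (by positivity), Real.deriv_Gamma_nat, Real.Gamma_nat_eq_factorial,
      mul_comm, mul_div_assoc, div_self (by positivity : (0:ℝ) < (n ! : ℝ)).ne', mul_one]
  have M : MonotoneOn (deriv f) (Ioi 0) :=
    hc.monotoneOn_deriv (fun y hy => hder hy)
  set m : ℕ := ⌈x⌉₊ with hm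
  have hxm : x ≤ m := Nat.le_ceil x
  set L : ℝ := deriv f x + γ with hL
  have key : ∀ n : ℕ,
      (harmonic n : ℝ) - ∑ k ∈ Finset.range n, 1 / (x + k) ≤ L ∧
      L ≤ (harmonic (n + m) : ℝ) - ∑ k ∈ Finset.range n, 1 / (x + k) := by
    intro n
    have h1 : deriv f ((n:ℝ) + 1) ≤ deriv f (x + n) := by
      apply M (mem_Ioi.mpr (by positivity)) (mem_Ioi.mpr (by positivity))
      push_cast; linarith
    have h2 : deriv f (x + n) ≤ deriv f ((((n + m) : ℕ) :ℝ) + 1) := by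
      apply M (mem_Ioi.mpr (by positivity)) (mem_Ioi.mpr (by positivity))
      push_cast; linarith
    rw [dfn n, hsum_rec n] at h1
    rw [dfn (n + m), hsum_rec n] at h2
    constructor <;> [linarith; linarith]
  have hterm : ∀ k : ℕ, (0:ℝ) ≤ 1 / ((k:ℝ) + 1) - 1 / (k + x) := by
    intro k
    have h0 : (0:ℝ) < (k:ℝ) + 1 := by positivity
    have h2 : ((k:ℝ) + 1) ≤ k + x := by linarith
    have := one_div_le_one_div_of_le h0 h2
    linarith
  have hhar : ∀ n : ℕ, (harmonic n : ℝ) = ∑ k ∈ Finset.range n, 1 / ((k:ℝ) + 1) := by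
    intro n
    rw [harmonic]
    push_cast
    simp [one_div]
  have hT : ∀ n : ℕ, ∑ k ∈ Finset.range n, (1 / ((k:ℝ) + 1) - 1 / (k + x))
      = (harmonic n : ℝ) - ∑ k ∈ Finset.range n, 1 / (x + k) := by
    intro n
    rw [Finset.sum_sub_distrib, hhar]
    congr 1
    exact Finset.sum_congr rfl fun k _ => by rw [add_comm]
  have hgap : ∀ n : ℕ, (harmonic (n + m) : ℝ) - harmonic n ≤ m / (n + 1) := by
    intro n
    rw [hhar, hhar, ← Finset.sum_Ico_eq_sub _ (Nat.le_add_right n m)]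
    have : ∀ k ∈ Finset.Ico n (n + m), 1 / ((k:ℝ) + 1) ≤ 1 / ((n:ℝ) + 1) := by
      intro k hk
      have hk' := (Finset.mem_Ico.mp hk).1
      apply one_div_le_one_div_of_le (by positivity)
      have : (n:ℝ) ≤ k := Nat.cast_le.mpr hk'
      linarith
    calc ∑ k ∈ Finset.Ico n (n + m), 1 / ((k:ℝ) + 1)
        ≤ (Finset.Ico n (n + m)).card • (1 / ((n:ℝ) + 1)) := Finset.sum_le_card_nsmul _ _ _ this
      _ = m / ((n:ℝ) + 1) := by
          rw [Nat.card_Ico, Nat.add_sub_cancel_left, nsmul_eq_mul]; ring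
  have htend : Tendsto (fun n : ℕ => ∑ k ∈ Finset.range n, (1 / ((k:ℝ) + 1) - 1 / (k + x)))
      atTop (𝓝 L) := by
    apply tendsto_of_tendsto_of_tendsto_of_le_of_le
      (g := fun n : ℕ => L - m / ((n:ℝ) + 1)) (h := fun _ : ℕ => L)
    · have h0 : Tendsto (fun n : ℕ => (m:ℝ) / ((n:ℝ) + 1)) atTop (𝓝 0) := by
        simpa [div_eq_mul_inv] using (tendsto_one_div_add_atTop_nhds_zero_nat).const_mul (m:ℝ)
      simpa using (tendsto_const_nhds (x := L)).sub h0
    · exact tendsto_const_nhds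
    · intro n
      dsimp only
      rw [hT n]
      have := (key n).2
      have := hgap n
      linarith
    · intro n
      dsimp only
      rw [hT n]
      exact (key n).1
  have hs : HasSum (fun k : ℕ => 1 / ((k:ℝ) + 1) - 1 / (k + x)) L :=
    (hasSum_iff_tendsto_nat_of_nonneg hterm L).mpr htend
  rw [hs.tsum_eq, hL, derivf_eq hx0]



lemma summable_aux (η : ℝ) (hη : 0 < η) :
    Summable (fun k : ℕ => 1 / ((k:ℝ) + 1) - 1 / (k + (η + 1))) := by
  have h2 : Summable (fun k : ℕ => η * (1 / ((k:ℝ) + 1) ^ 2)) := by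
    apply Summable.mul_left
    have h := (Real.summable_one_div_nat_pow (p := 2)).mpr one_lt_two
    refine (h.comp_injective Nat.succ_injective).congr fun k => ?_
    simp only [Function.comp_apply, Nat.succ_eq_add_one]
    push_cast
    ring
  apply Summable.of_nonneg_of_le _ _ h2
  · intro k
    have h0 : (0:ℝ) < (k:ℝ) + 1 := by positivity
    have := one_div_le_one_div_of_le h0 (by linarith : ((k:ℝ) + 1) ≤ k + (η + 1))
    linarith
  · intro k
    have h0 : (0:ℝ) < (k:ℝ) + 1 := by positivity
    have h1 : (0:ℝ) < (k:ℝ) + (η + 1) := by positivity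
    rw [div_sub_div _ _ h0.ne' h1.ne']
    have e : (1:ℝ) * ((k:ℝ) + (η+1)) - ((k:ℝ)+1) * 1 = η := by ring
    rw [e]
    have hsq : ((k:ℝ)+1)^2 ≤ ((k:ℝ)+1) * ((k:ℝ)+(η+1)) := by nlinarith
    calc η / (((k:ℝ)+1) * ((k:ℝ)+(η+1))) ≤ η / (((k:ℝ)+1)^2) :=
          div_le_div_of_nonneg_left hη.le (by positivity) hsq
      _ = η * (1 / ((k:ℝ)+1)^2) := by ring

lemma natcast_neg_one_lt (k : ℕ) : (-1:ℝ) < (k:ℝ) :=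
  lt_of_lt_of_le (by norm_num) (Nat.cast_nonneg k)

lemma int_rep (η : ℝ) (hη : 0 < η) :
    ∫ u in Ioo (0:ℝ) 1, (1 - u ^ η) / (1 - u)
      = ∑' k : ℕ, (1 / ((k:ℝ) + 1) - 1 / (k + (η + 1))) := by
  set μ := (volume : Measure ℝ).restrict (Ioo (0:ℝ) 1) with hμ
  set F : ℕ → ℝ → ℝ := fun k u => u ^ (k:ℝ) - u ^ ((k:ℝ) + η) with hF
  have hke : ∀ k : ℕ, (-1:ℝ) < (k:ℝ) + η := fun k => by
    have := Nat.cast_nonneg (α := ℝ) k; linarith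
  have h1 : ∀ k : ℕ, IntervalIntegrable (fun u : ℝ => u ^ (k:ℝ)) volume 0 1 :=
    fun k => intervalIntegral.intervalIntegrable_rpow' (natcast_neg_one_lt k)
  have h2 : ∀ k : ℕ, IntervalIntegrable (fun u : ℝ => u ^ ((k:ℝ) + η)) volume 0 1 :=
    fun k => intervalIntegral.intervalIntegrable_rpow' (hke k)
  have hFint : ∀ k : ℕ, Integrable (F k) μ := by
    intro k
    rw [hμ]
    have h3 : IntegrableOn (fun u : ℝ => u ^ (k:ℝ) - u ^ ((k:ℝ) + η)) (Ioc 0 1) volume :=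
      (intervalIntegrable_iff_integrableOn_Ioc_of_le (by norm_num)).mp ((h1 k).sub (h2 k))
    exact h3.mono_set Ioo_subset_Ioc_self
  have hFnn : ∀ k : ℕ, ∀ u ∈ Ioo (0:ℝ) 1, 0 ≤ F k u := by
    intro k u hu
    have := Real.rpow_le_rpow_of_exponent_ge hu.1 hu.2.le (by linarith : (k:ℝ) ≤ (k:ℝ) + η)
    show (0:ℝ) ≤ u ^ (k:ℝ) - u ^ ((k:ℝ) + η)
    linarith
  have hFval : ∀ k : ℕ, ∫ u, F k u ∂μ = 1 / ((k:ℝ) + 1) - 1 / (k + (η + 1)) := by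
    intro k
    rw [hμ, ← MeasureTheory.integral_Ioc_eq_integral_Ioo,
      ← intervalIntegral.integral_of_le (by norm_num : (0:ℝ) ≤ 1)]
    rw [show F k = fun u : ℝ => u ^ (k:ℝ) - u ^ ((k:ℝ) + η) from rfl]
    rw [intervalIntegral.integral_sub (h1 k) (h2 k),
      integral_rpow (Or.inl (natcast_neg_one_lt k)), integral_rpow (Or.inl (hke k))]
    rw [Real.one_rpow, Real.zero_rpow (by positivity : ((k:ℝ)+1) ≠ 0),
      Real.one_rpow, Real.zero_rpow (show ((k:ℝ)+η+1) ≠ 0 by positivity)]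
    ring_nf
  have hsum : Summable (fun k : ℕ => ∫ u, ‖F k u‖ ∂μ) := by
    have he : ∀ k : ℕ, ∫ u, ‖F k u‖ ∂μ = ∫ u, F k u ∂μ := by
      intro k
      apply MeasureTheory.integral_congr_ae
      rw [hμ]
      filter_upwards [MeasureTheory.ae_restrict_mem measurableSet_Ioo] with u hu
      exact abs_of_nonneg (hFnn k u hu)
    simp_rw [he, hFval]
    exact summable_aux η hη
  have hmain := MeasureTheory.integral_tsum_of_summable_integral_norm hFint hsum
  simp_rw [hFval] at hmain
  rw [hmain]
  apply MeasureTheory.integral_congr_ae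
  rw [hμ]
  filter_upwards [MeasureTheory.ae_restrict_mem measurableSet_Ioo] with u hu
  have hu0 : 0 < u := hu.1
  have hu1 : u < 1 := hu.2
  have hg : Summable (fun k : ℕ => u ^ (k:ℝ)) := by
    refine ((summable_geometric_of_lt_one hu0.le hu1).congr fun k => ?_)
    rw [Real.rpow_natCast]
  have hg2 : Summable (fun k : ℕ => u ^ ((k:ℝ) + η)) := by
    refine (hg.mul_right (u ^ η)).congr fun k => ?_
    exact (Real.rpow_add hu0 _ _).symm
  rw [show (fun k : ℕ => F k u) = fun k : ℕ => u ^ (k:ℝ) - u ^ ((k:ℝ) + η) from rfl]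
  rw [Summable.tsum_sub hg hg2]
  have e1 : ∑' k : ℕ, u ^ (k:ℝ) = (1 - u)⁻¹ := by
    rw [tsum_congr (fun k => Real.rpow_natCast u k)]
    exact tsum_geometric_of_lt_one hu0.le hu1
  have e2 : ∑' k : ℕ, u ^ ((k:ℝ) + η) = u ^ η * (1 - u)⁻¹ := by
    have h : ∀ k : ℕ, u ^ ((k:ℝ) + η) = u ^ η * u ^ (k:ℝ) := fun k => by
      rw [Real.rpow_add hu0, mul_comm]
    rw [tsum_congr h, tsum_mul_left, e1]
  rw [e1, e2]
  have : (1:ℝ) - u ≠ 0 := by linarith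
  field_simp



-- basic log bound
lemma neg_log_le_two_mul (t : ℝ) (h0 : 0 < t) (h2 : t ≤ 1/2) :
    - Real.log (1 - t) ≤ 2 * t := by
  have hu : (0:ℝ) < 1 - t := by linarith
  have h := Real.one_sub_inv_le_log_of_pos hu
  have hinv : (1 - t)⁻¹ ≤ 2 := by
    rw [inv_le_comm₀ hu (by norm_num)]
    linarith
  have : 1 - (1-t)⁻¹ ≥ 1 - 2 := by linarith
  -- want: -log(1-t) ≤ 2t, i.e. log(1-t) ≥ -2t.  1 - (1-t)⁻¹ = -t/(1-t) ≥ -2t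
  have e : 1 - (1-t)⁻¹ = -(t * (1-t)⁻¹) := by
    field_simp; ring
  have hb : t * (1-t)⁻¹ ≤ t * 2 := by
    apply mul_le_mul_of_nonneg_left hinv h0.le
  nlinarith [h, e]

lemma one_sub_rpow_le (η t : ℝ) (hη : 0 < η) (h0 : 0 < t) (h2 : t ≤ 1/2) :
    1 - 2 * η * t ≤ (1 - t) ^ η := by
  have hu : (0:ℝ) < 1 - t := by linarith
  rw [Real.rpow_def_of_pos hu, mul_comm (Real.log (1-t)) η]
  have hl := neg_log_le_two_mul t h0 h2
  have : -(2 * η * t) ≤ η * Real.log (1 - t) := by nlinarith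
  nlinarith [Real.add_one_le_exp (η * Real.log (1 - t))]

lemma rpow_neg_sub_one_le (η t : ℝ) (hη : 0 < η) (h0 : 0 < t) (h2 : t ≤ 1/2) :
    (1 - t) ^ (-(η+1)) - 1 ≤ 2 * (η+1) * Real.exp (η+1) * t := by
  have hu : (0:ℝ) < 1 - t := by linarith
  set x : ℝ := -((η+1) * Real.log (1 - t)) with hx
  have erw : (1 - t) ^ (-(η+1)) = Real.exp x := by
    rw [Real.rpow_def_of_pos hu, hx]; ring_nf
  rw [erw]
  have hlog : Real.log (1 - t) ≤ 0 := Real.log_nonpos hu.le (by linarith)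
  have hx0 : 0 ≤ x := by nlinarith
  have hxle : x ≤ 2 * (η+1) * t := by
    have := neg_log_le_two_mul t h0 h2
    rw [hx]; nlinarith
  have hxle1 : x ≤ η + 1 := by nlinarith
  have key : Real.exp x - 1 ≤ x * Real.exp x := by
    have h1 := Real.add_one_le_exp (-x)
    have h2 := Real.exp_pos x
    have h3 : Real.exp (-x) * Real.exp x = 1 := by
      rw [← Real.exp_add]; simp
    nlinarith
  have hmono : Real.exp x ≤ Real.exp (η+1) := Real.exp_le_exp.mpr hxle1
  nlinarith [Real.exp_pos x]

lemma one_le_rpow_neg (η t : ℝ) (hη : 0 < η) (h0 : 0 < t) (h1 : t < 1) :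
    1 ≤ (1 - t) ^ (-(η+1)) := by
  have hu : (0:ℝ) < 1 - t := by linarith
  rw [Real.rpow_neg hu.le]
  rw [one_le_inv_iff₀]
  exact ⟨Real.rpow_pos_of_pos hu _, Real.rpow_le_one hu.le (by linarith) (by linarith)⟩




lemma integrableOn_Ioo_of_bdd {f : ℝ → ℝ} {a b M : ℝ} (hm : Measurable f)
    (h : ∀ t ∈ Ioo a b, |f t| ≤ M) : IntegrableOn f (Ioo a b) volume :=
  Measure.integrableOn_of_bounded measure_Ioo_lt_top.ne hm.aestronglyMeasurable
    ((ae_restrict_mem measurableSet_Ioo).mono h)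

lemma P2_integrable (η : ℝ) (hη : 0 < η) :
    IntegrableOn (fun t : ℝ => (1 - (1-t)^η)/t) (Ioo (0:ℝ) (1/2)) volume := by
  apply integrableOn_Ioo_of_bdd (M := 2*η)
  · exact (measurable_const.sub ((measurable_const.sub measurable_id).pow_const η)).div measurable_id
  · intro t ht
    have h0 := ht.1
    have h2 : t ≤ 1/2 := ht.2.le
    have hu : (0:ℝ) < 1 - t := by linarith
    have hle1 : (1-t)^η ≤ 1 := Real.rpow_le_one hu.le (by linarith) hη.le
    have hlow := one_sub_rpow_le η t hη h0 h2
    rw [abs_le]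
    constructor
    · have : 0 ≤ (1 - (1-t)^η)/t := div_nonneg (by linarith) h0.le
      nlinarith
    · rw [div_le_iff₀ h0]
      nlinarith

lemma P3_integrable (η : ℝ) (hη : 0 < η) :
    IntegrableOn (fun t : ℝ => t^(η-1)*((1-t)^(-(η+1))-1) - (1-t)^(η-1))
      (Ioo (0:ℝ) (1/2)) volume := by
  apply integrableOn_Ioo_of_bdd (M := 2*(η+1)*Real.exp (η+1) + 2)
  · exact ((measurable_id.pow_const (η-1)).mul
      (((measurable_const.sub measurable_id).pow_const (-(η+1))).sub measurable_const)).sub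
      ((measurable_const.sub measurable_id).pow_const (η-1))
  · intro t ht
    have h0 := ht.1
    have h2 : t ≤ 1/2 := ht.2.le
    have hu : (0:ℝ) < 1 - t := by linarith
    have hA0 : 0 ≤ t^(η-1)*((1-t)^(-(η+1))-1) := by
      apply mul_nonneg (Real.rpow_nonneg h0.le _)
      have := one_le_rpow_neg η t hη h0 (by linarith)
      linarith
    have hAle : t^(η-1)*((1-t)^(-(η+1))-1) ≤ 2*(η+1)*Real.exp (η+1) := by
      have hb := rpow_neg_sub_one_le η t hη h0 h2
      have step : t^(η-1)*((1-t)^(-(η+1))-1) ≤ t^(η-1) * (2*(η+1)*Real.exp (η+1)*t) :=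
        mul_le_mul_of_nonneg_left hb (Real.rpow_nonneg h0.le _)
      have e1 : t^((η-1)+1) = t^(η-1) * t^(1:ℝ) := Real.rpow_add h0 _ _
      rw [Real.rpow_one] at e1
      rw [show (η-1)+1 = η by ring] at e1
      have e : t^(η-1) * (2*(η+1)*Real.exp (η+1)*t) = 2*(η+1)*Real.exp (η+1) * t^η := by
        rw [show t^(η-1)*(2*(η+1)*Real.exp (η+1)*t) = 2*(η+1)*Real.exp (η+1)*(t^(η-1)*t) from by ring, ← e1]
      rw [e] at step
      have hle1 : t^η ≤ 1 := Real.rpow_le_one h0.le (by linarith) hη.le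
      have hC : (0:ℝ) ≤ 2*(η+1)*Real.exp (η+1) := by positivity
      nlinarith [mul_le_mul_of_nonneg_left hle1 hC]
    have hB0 : 0 ≤ (1-t)^(η-1) := Real.rpow_nonneg hu.le _
    have hBle : (1-t)^(η-1) ≤ 2 := by
      have e : (1-t)^(η-1) = (1-t)^η / (1-t) := by
        rw [Real.rpow_sub hu, Real.rpow_one]
      rw [e, div_le_iff₀ hu]
      have hle1 : (1-t)^η ≤ 1 := Real.rpow_le_one hu.le (by linarith) hη.le
      nlinarith
    rw [abs_le]
    constructor <;> [nlinarith [Real.exp_pos (η+1)]; nlinarith [Real.exp_pos (η+1)]]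

lemma P3_zero (η : ℝ) (hη : 0 < η) :
    ∫ t in Ioo (0:ℝ) (1/2), (t^(η-1)*((1-t)^(-(η+1))-1) - (1-t)^(η-1)) = 0 := by
  have hle : (0:ℝ) ≤ 1/2 := by norm_num
  rw [← MeasureTheory.integral_Ioc_eq_integral_Ioo, ← intervalIntegral.integral_of_le hle]
  set Q : ℝ → ℝ := fun t => (1/η) * ((t/(1-t))^η - t^η + (1-t)^η) with hQ
  have hcont : ContinuousOn Q (Icc 0 (1/2)) := by
    apply ContinuousOn.mul continuousOn_const
    apply ContinuousOn.add
    apply ContinuousOn.sub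
    · apply ContinuousOn.rpow_const
      · apply ContinuousOn.div continuousOn_id (continuousOn_const.sub continuousOn_id)
        intro x hx
        have hhx : x ≤ 1/2 := hx.2
        show (1:ℝ) - x ≠ 0
        intro hc; linarith
      · exact fun x _ => Or.inr hη.le
    · exact continuousOn_id.rpow_const (fun x _ => Or.inr hη.le)
    · exact (continuousOn_const.sub continuousOn_id).rpow_const (fun x _ => Or.inr hη.le)
  have hderiv : ∀ t ∈ Ioo (0:ℝ) (1/2),
      HasDerivAt Q (t^(η-1)*((1-t)^(-(η+1))-1) - (1-t)^(η-1)) t := by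
    intro t ht
    have h0 := ht.1
    have hu : (0:ℝ) < 1 - t := by have := ht.2; linarith
    have hφ : HasDerivAt (fun y : ℝ => y/(1-y)) ((1*(1-t) - t*(0-1))/(1-t)^2) t := by
      exact (hasDerivAt_id t).div ((hasDerivAt_const t 1).sub (hasDerivAt_id t)) hu.ne'
    have h1 := hφ.rpow_const (p := η) (Or.inl (ne_of_gt (div_pos h0 hu)))
    have h2 : HasDerivAt (fun y : ℝ => y^η) (η * t^(η-1)) t :=
      Real.hasDerivAt_rpow_const (p := η) (Or.inl h0.ne')
    have h3 := (((hasDerivAt_const t 1).sub (hasDerivAt_id t)).rpow_const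
      (p := η) (Or.inl hu.ne'))
    have h4 := (((h1.sub h2).add h3).const_mul (1/η))
    refine h4.congr_deriv ?_
    have hd : (t/(1-t))^(η-1) = t^(η-1) / (1-t)^(η-1) := Real.div_rpow h0.le hu.le (η-1)
    have hninv : (1-t)^(-(η+1)) = ((1-t)^(η-1) * (1-t)^2)⁻¹ := by
      rw [Real.rpow_neg hu.le]
      congr 1
      rw [← Real.rpow_two, ← Real.rpow_add hu]
      ring_nf
    have hb : (0:ℝ) < (1-t)^(η-1) := Real.rpow_pos_of_pos hu _
    rw [hninv, hd]
    simp only [Pi.sub_apply, id_eq]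
    field_simp
    ring
  have hII : IntervalIntegrable
      (fun t : ℝ => t^(η-1)*((1-t)^(-(η+1))-1) - (1-t)^(η-1)) volume 0 (1/2) := by
    rw [intervalIntegrable_iff_integrableOn_Ioo_of_le hle]
    exact P3_integrable η hη
  rw [intervalIntegral.integral_eq_sub_of_hasDerivAt_of_le hle hcont hderiv hII]
  simp only [hQ]
  norm_num [Real.zero_rpow hη.ne', Real.one_rpow]




lemma key (η : ℝ) (hη : 0 < η) :
    ∫ z in (0:ℝ)..1, (1 - (1 + z) ^ (-η)) * ((1 + z ^ η) / z)
      = ∫ u in Ioo (0:ℝ) 1, (1 - u ^ η) / (1 - u) := by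
  have half : (0:ℝ) < 1/2 := by norm_num
  -- integrable pieces
  have P1int : IntegrableOn (fun t : ℝ => (1 - t^η)/(1-t)) (Ioo (0:ℝ) (1/2)) volume := by
    apply integrableOn_Ioo_of_bdd (M := 2)
    · exact (measurable_const.sub (measurable_id.pow_const η)).div
        (measurable_const.sub measurable_id)
    · intro t ht
      have h0 := ht.1
      have h2 : t < 1/2 := ht.2
      have hu : (0:ℝ) < 1 - t := by linarith
      have h1 : t^η ≤ 1 := Real.rpow_le_one h0.le (by linarith) hη.le
      have h1' : 0 ≤ t^η := Real.rpow_nonneg h0.le η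
      rw [abs_le]
      constructor
      · have : 0 ≤ (1 - t^η)/(1-t) := div_nonneg (by linarith) hu.le
        linarith
      · rw [div_le_iff₀ hu]; nlinarith
  have P2int := P2_integrable η hη
  have P3int := P3_integrable η hη
  -- substitution φ t = t/(1-t)
  have himg : Ioo (0:ℝ) 1 = (fun t : ℝ => t/(1-t)) '' Ioo 0 (1/2) := by
    ext z
    simp only [mem_image, mem_Ioo]
    constructor
    · rintro ⟨hz0, hz1⟩
      refine ⟨z/(1+z), ⟨by positivity, ?_⟩, ?_⟩
      · rw [div_lt_iff₀ (by linarith)]; linarith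
      · have h1z : (1:ℝ) + z ≠ 0 := by positivity
        field_simp; ring
    · rintro ⟨t, ⟨ht0, ht2⟩, rfl⟩
      have hu : (0:ℝ) < 1 - t := by linarith
      constructor
      · positivity
      · rw [div_lt_one hu]; linarith
  have hd : ∀ t ∈ Ioo (0:ℝ) (1/2), HasDerivWithinAt (fun t : ℝ => t/(1-t))
      ((1*(1-t) - t*(0-1))/(1-t)^2) (Ioo (0:ℝ) (1/2)) t := by
    intro t ht
    have hu : (0:ℝ) < 1 - t := by have := ht.2; linarith
    exact (((hasDerivAt_id t).div ((hasDerivAt_const t 1).sub (hasDerivAt_id t))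
      hu.ne')).hasDerivWithinAt
  have hinj : InjOn (fun t : ℝ => t/(1-t)) (Ioo (0:ℝ) (1/2)) := by
    intro a ha b hb h
    have hua : (0:ℝ) < 1 - a := by have := ha.2; linarith
    have hub : (0:ℝ) < 1 - b := by have := hb.2; linarith
    rw [div_eq_div_iff hua.ne' hub.ne'] at h
    nlinarith
  have hsub1 := integral_image_eq_integral_abs_deriv_smul measurableSet_Ioo hd hinj
    (fun z => (1 - (1 + z) ^ (-η)) * ((1 + z ^ η) / z))
  -- pointwise identity
  have hpt : ∀ t ∈ Ioo (0:ℝ) (1/2),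
      |(1*(1-t) - t*(0-1))/(1-t)^2| •
        ((1 - (1 + t/(1-t)) ^ (-η)) * ((1 + (t/(1-t)) ^ η) / (t/(1-t))))
      = (1 - t^η)/(1-t) + (1 - (1-t)^η)/t
        + (t^(η-1)*((1-t)^(-(η+1))-1) - (1-t)^(η-1)) := by
    intro t ht
    have h0 := ht.1
    have hu : (0:ℝ) < 1 - t := by have := ht.2; linarith
    have e1 : 1 + t/(1-t) = (1-t)⁻¹ := by field_simp; ring
    have e2 : (1 + t/(1-t)) ^ (-η) = (1-t)^η := by
      rw [e1, Real.inv_rpow hu.le, Real.rpow_neg hu.le, inv_inv]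
    have e3 : (t/(1-t))^η = t^η/(1-t)^η := Real.div_rpow h0.le hu.le η
    have he_t : t^η = t * t^(η-1) := by
      rw [Real.rpow_sub h0, Real.rpow_one]
      field_simp
    have he_u : (1-t)^η = (1-t) * (1-t)^(η-1) := by
      rw [Real.rpow_sub hu, Real.rpow_one]
      field_simp
    have he_n : (1-t)^(-(η+1)) = ((1-t)^(η-1) * (1-t)^2)⁻¹ := by
      rw [Real.rpow_neg hu.le]
      congr 1
      rw [← Real.rpow_two, ← Real.rpow_add hu]
      ring_nf
    have hdpos : 0 < (1*(1-t) - t*(0-1))/(1-t)^2 := by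
      apply _root_.div_pos (by nlinarith) (by positivity)
    rw [smul_eq_mul, abs_of_pos hdpos, e2, e3, he_n, he_t, he_u]
    have ha : (0:ℝ) < t^(η-1) := Real.rpow_pos_of_pos h0 _
    have hb : (0:ℝ) < (1-t)^(η-1) := Real.rpow_pos_of_pos hu _
    set a := t^(η-1)
    set b := (1-t)^(η-1)
    field_simp
    ring
  -- assemble LHS
  have halt : ∫ z in Ioo (0:ℝ) 1, (1 - (1 + z) ^ (-η)) * ((1 + z ^ η) / z)
      = ∫ x in Ioo (0:ℝ) (1/2), ((1 - x^η)/(1-x) + (1 - (1-x)^η)/x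
        + (x^(η-1)*((1-x)^(-(η+1))-1) - (1-x)^(η-1))) := by
    rw [himg, hsub1]
    exact MeasureTheory.setIntegral_congr_fun measurableSet_Ioo hpt
  rw [intervalIntegral.integral_of_le (by norm_num : (0:ℝ) ≤ 1),
    MeasureTheory.integral_Ioc_eq_integral_Ioo, halt]
  have step1 : ∫ x in Ioo (0:ℝ) (1/2), ((1 - x^η)/(1-x) + (1 - (1-x)^η)/x
        + (x^(η-1)*((1-x)^(-(η+1))-1) - (1-x)^(η-1)))
      = (∫ x in Ioo (0:ℝ) (1/2), ((1 - x^η)/(1-x) + (1 - (1-x)^η)/x))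
        + ∫ x in Ioo (0:ℝ) (1/2), (x^(η-1)*((1-x)^(-(η+1))-1) - (1-x)^(η-1)) :=
    MeasureTheory.integral_add (P1int.add P2int) P3int
  have step2 : ∫ x in Ioo (0:ℝ) (1/2), ((1 - x^η)/(1-x) + (1 - (1-x)^η)/x)
      = (∫ x in Ioo (0:ℝ) (1/2), (1 - x^η)/(1-x))
        + ∫ x in Ioo (0:ℝ) (1/2), (1 - (1-x)^η)/x :=
    MeasureTheory.integral_add P1int P2int
  rw [step1, step2, P3_zero η hη]
  -- RHS split
  have gIooInt : IntegrableOn (fun u : ℝ => (1-u^η)/(1-u)) (Ioo (1/2:ℝ) 1) volume := by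
    apply integrableOn_Ioo_of_bdd (M := 2*η)
    · exact (measurable_const.sub (measurable_id.pow_const η)).div
        (measurable_const.sub measurable_id)
    · intro u hu'
      have h1 : (1:ℝ)/2 < u := hu'.1
      have h2 : u < 1 := hu'.2
      have hu0 : (0:ℝ) < u := by linarith
      have hv : (0:ℝ) < 1 - u := by linarith
      have key := one_sub_rpow_le η (1-u) hη (by linarith) (by linarith)
      rw [show (1:ℝ) - (1-u) = u by ring] at key
      have hle1 : u^η ≤ 1 := Real.rpow_le_one hu0.le h2.le hη.le
      rw [abs_le]
      constructor
      · have : 0 ≤ (1 - u^η)/(1-u) := div_nonneg (by linarith) hv.le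
        linarith
      · rw [div_le_iff₀ hv]; nlinarith
  have hsplit : ∫ u in Ioo (0:ℝ) 1, (1-u^η)/(1-u)
      = (∫ u in Ioo (0:ℝ) (1/2), (1-u^η)/(1-u))
        + ∫ u in Ioo (1/2:ℝ) 1, (1-u^η)/(1-u) := by
    rw [← Set.Ioo_union_Ico_eq_Ioo half (by norm_num : (1:ℝ)/2 ≤ 1)]
    rw [MeasureTheory.setIntegral_union ?disj measurableSet_Ico P1int
      ((integrableOn_Ico_iff_integrableOn_Ioo).mpr gIooInt),
      MeasureTheory.integral_Ico_eq_integral_Ioo]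
    case disj =>
      rw [Set.disjoint_left]
      rintro x hx hx2
      exact absurd hx2.1 (not_le.mpr hx.2)
  -- second substitution
  have himg2 : Ioo ((1:ℝ)/2) 1 = (fun t : ℝ => 1 - t) '' Ioo 0 (1/2) := by
    rw [Set.image_const_sub_Ioo]
    norm_num
  have hd2 : ∀ t ∈ Ioo (0:ℝ) (1/2), HasDerivWithinAt (fun t : ℝ => 1 - t)
      ((-1 : ℝ)) (Ioo (0:ℝ) (1/2)) t := by
    intro t ht
    exact (((hasDerivAt_const t (1:ℝ)).sub (hasDerivAt_id' t))).hasDerivWithinAt.congr_deriv (by norm_num)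
  have hinj2 : InjOn (fun t : ℝ => 1 - t) (Ioo (0:ℝ) (1/2)) := by
    intro x _ y _ h
    simp only at h
    linarith
  have hsub2 := integral_image_eq_integral_abs_deriv_smul measurableSet_Ioo hd2 hinj2
    (fun u : ℝ => (1-u^η)/(1-u))
  have hcongr : ∫ x in Ioo (0:ℝ) (1/2), |(-1:ℝ)| • ((1 - (1-x)^η)/(1-(1-x)))
      = ∫ x in Ioo (0:ℝ) (1/2), (1 - (1-x)^η)/x :=
    MeasureTheory.setIntegral_congr_fun measurableSet_Ioo
      (fun t ht => by simp [sub_sub_cancel])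
  rw [himg2, hsub2, hcongr] at hsplit
  rw [hsplit]
  ring


open Real

/-- The digamma function `ψ = Γ'/Γ`. -/
noncomputable def digamma (x : ℝ) : ℝ := deriv Real.Gamma x / Real.Gamma x

/-- The Euler–Mascheroni constant `γ = −Γ′(1)`. -/
noncomputable def eulerGamma : ℝ := -deriv Real.Gamma 1

/-- `∫_0^1 (1 − (1+z)^{−η}) (1+z^η)/z dz = ψ(η+1) + γ`. -/
theorem stmt4 (η : ℝ) (hη : 0 < η) :
    ∫ z in (0:ℝ)..1, (1 - (1 + z) ^ (-η)) * ((1 + z ^ η) / z)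
      = digamma (η + 1) + eulerGamma := by
  have hg : eulerGamma = Real.eulerMascheroniConstant := by
    rw [eulerGamma, Real.eulerMascheroniConstant_eq_neg_deriv]
  rw [key η hη, int_rep η hη, hg,
    show digamma (η+1) = deriv Real.Gamma (η+1) / Real.Gamma (η+1) from rfl]
  exact (digamma_series (η+1) (by linarith)).symm
end

section
/- Let c > 0 and d, δ ≥ 0 be real numbers. Then, as t → 0⁺, Σ_{k=1}^{∞} (ck+d)^{δ} e^{−2(ck+d)² t} = ((2t)^{−(δ+1)/2}/(2c)) Γ((δ+1)/2) + O(t^{−δ/2}); that is, there exist constants M, t₀ > 0 such that for all 0 < t < t₀, | Σ_{k=1}^{∞} (ck+d)^{δ} e^{−2(ck+d)² t} − ((2t)^{−(δ+1)/2}/(2c)) Γ((δ+1)/2) | ≤ M t^{−δ/2}. -/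
open Real

namespace Stmt14
open Set MeasureTheory Filter

lemma shift_int (d : ℝ) (g : ℝ → ℝ) :
    ∫ x in Ioi (0:ℝ), g (x + d) = ∫ v in Ioi d, g v := by
  have h := (measurePreserving_add_right (volume : Measure ℝ) d).setIntegral_preimage_emb
    (Homeomorph.addRight d).measurableEmbedding g (Ioi d)
  simpa using h

lemma integral_affine {c : ℝ} (hc : 0 < c) (d : ℝ) (g : ℝ → ℝ) :
    ∫ x in Ioi (0:ℝ), g (c * x + d) = c⁻¹ * ∫ v in Ioi d, g v := by
  have h1 := integral_comp_mul_left_Ioi (fun x => g (x + d)) 0 hc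
  simp only [mul_zero, smul_eq_mul] at h1
  rw [h1, shift_int d g]

lemma integrableOn_affine {c : ℝ} (hc : 0 < c) {d : ℝ} {g : ℝ → ℝ}
    (hg : IntegrableOn g (Ioi d)) :
    IntegrableOn (fun x => g (c * x + d)) (Ioi 0) := by
  have h2 : IntegrableOn (fun x => g (x + d)) (Ioi 0) := by
    have h := (measurePreserving_add_right (volume : Measure ℝ) d).integrableOn_comp_preimage
      (Homeomorph.addRight d).measurableEmbedding (f := g) (s := Ioi d)
    simpa [Function.comp_def] using h.2 hg
  have h3 := (integrableOn_Ioi_comp_mul_left_iff (fun x => g (x + d)) 0 hc).2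
    (by simpa using h2)
  simpa using h3

lemma moment_eq {t : ℝ} (ht : 0 < t) {s : ℝ} (hs : -1 < s) :
    ∫ v in Ioi (0:ℝ), v ^ s * exp (-2 * v ^ 2 * t)
      = (2*t) ^ (-(s+1)/2) * (1/2) * Gamma ((s+1)/2) := by
  have h : ∀ v : ℝ, v ^ s * exp (-2 * v ^ 2 * t) = v ^ s * exp (-(2*t) * v ^ (2:ℝ)) := by
    intro v
    rw [rpow_two, show -2 * v ^ 2 * t = -(2*t) * v ^ 2 by ring]
  simp_rw [h]
  rw [integral_rpow_mul_exp_neg_mul_rpow two_pos hs (by positivity)]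

lemma moment_int {t : ℝ} (ht : 0 < t) {s : ℝ} (hs : -1 < s) :
    IntegrableOn (fun v : ℝ => v ^ s * exp (-2 * v ^ 2 * t)) (Ioi 0) := by
  have h := integrableOn_rpow_mul_exp_neg_mul_sq (by positivity : (0:ℝ) < 2*t) hs
  refine h.congr_fun (fun v _ => ?_) measurableSet_Ioi
  beta_reduce
  rw [show -(2*t) * v ^ 2 = -2 * v ^ 2 * t by ring]

lemma union_Ioc : ⋃ k : ℕ, Ioc ((k:ℝ)) ((k:ℝ)+1) = Ioi 0 := by
  ext x
  simp only [mem_iUnion, mem_Ioc, mem_Ioi]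
  constructor
  · rintro ⟨k, hk, -⟩
    exact lt_of_le_of_lt (Nat.cast_nonneg k) hk
  · intro hx
    have h1 : 1 ≤ ⌈x⌉₊ := Nat.one_le_ceil_iff.2 hx
    refine ⟨⌈x⌉₊ - 1, ?_, ?_⟩
    · have := Nat.ceil_lt_add_one hx.le
      push_cast [Nat.cast_sub h1]
      linarith
    · have := Nat.le_ceil x
      push_cast [Nat.cast_sub h1]
      linarith

lemma disj_Ioc : Pairwise (Function.onFun Disjoint fun k : ℕ => Ioc ((k:ℝ)) ((k:ℝ)+1)) := by
  intro k l hkl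
  rcases hkl.lt_or_gt with h | h
  · have : (k:ℝ) + 1 ≤ (l:ℝ) := by exact_mod_cast h
    simp only [Function.onFun]
    rw [Set.Ioc_disjoint_Ioc]
    exact le_trans (min_le_left _ _) (le_trans this (le_max_right _ _))
  · have : (l:ℝ) + 1 ≤ (k:ℝ) := by exact_mod_cast h
    simp only [Function.onFun]
    rw [Set.Ioc_disjoint_Ioc]
    exact le_trans (min_le_right _ _) (le_trans this (le_max_left _ _))

lemma deriv_f {c d δ t : ℝ} {x : ℝ} (hx : 0 < c * x + d) :
    HasDerivAt (fun y : ℝ => (c*y+d)^δ * exp (-2*(c*y+d)^2*t))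
      (c * (δ * (c*x+d)^(δ-1) * exp (-2*(c*x+d)^2*t))
        - c * (4*t*(c*x+d)^(δ+1) * exp (-2*(c*x+d)^2*t))) x := by
  have h1 : HasDerivAt (fun y : ℝ => c*y+d) c x := by
    simpa using ((hasDerivAt_id x).const_mul c).add_const d
  have h2 : HasDerivAt (fun y : ℝ => (c*y+d)^δ) (δ * (c*x+d)^(δ-1) * c) x := by
    have := (Real.hasDerivAt_rpow_const (x := c*x+d) (p := δ) (Or.inl hx.ne')).comp x h1
    exact this
  have h3 : HasDerivAt (fun y : ℝ => -2*(c*y+d)^2*t) (-2*(2*(c*x+d)*c)*t) x := by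
    have h := ((h1.pow 2).const_mul (-2)).mul_const t
    simpa [mul_comm, mul_assoc, mul_left_comm] using h
  have h4 := h3.exp
  have h5 := h2.mul h4
  refine HasDerivAt.congr_deriv h5 ?_
  rw [show (c*x+d)^(δ+1) = (c*x+d)^δ * (c*x+d) from Real.rpow_add_one hx.ne' δ]
  ring

lemma interval_bound {c d δ t : ℝ} (hc : 0 < c) (hd : 0 ≤ d) (hδ : 0 ≤ δ) (ht : 0 < t)
    (hΦ : IntegrableOn (fun x : ℝ => c*(δ*(c*x+d)^(δ-1)*exp (-2*(c*x+d)^2*t)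
        + 4*t*(c*x+d)^(δ+1)*exp (-2*(c*x+d)^2*t))) (Ioi 0)) (k : ℕ) :
    |(c*((k:ℝ)+1)+d)^δ * exp (-2*(c*((k:ℝ)+1)+d)^2*t)
        - ∫ x in Ioc ((k:ℝ)) ((k:ℝ)+1), (c*x+d)^δ * exp (-2*(c*x+d)^2*t)|
      ≤ ∫ x in Ioc ((k:ℝ)) ((k:ℝ)+1), c*(δ*(c*x+d)^(δ-1)*exp (-2*(c*x+d)^2*t)
          + 4*t*(c*x+d)^(δ+1)*exp (-2*(c*x+d)^2*t)) := by
  set a := (k:ℝ) with ha_def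
  have ha : 0 ≤ a := Nat.cast_nonneg k
  have hab : a ≤ a + 1 := by linarith
  set f := fun x : ℝ => (c*x+d)^δ * exp (-2*(c*x+d)^2*t) with hf
  set φ := fun x : ℝ => c*(δ*(c*x+d)^(δ-1)*exp (-2*(c*x+d)^2*t)
      + 4*t*(c*x+d)^(δ+1)*exp (-2*(c*x+d)^2*t)) with hφdef
  have hrc : Continuous fun v : ℝ => v ^ δ :=
    continuous_iff_continuousAt.2 fun v => Real.continuousAt_rpow_const v δ (Or.inr hδ)
  have hfc : Continuous f := by
    apply Continuous.mul
    · exact hrc.comp (by continuity)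
    · exact Real.continuous_exp.comp (by continuity)
  have hfi : IntervalIntegrable f volume a (a+1) := hfc.intervalIntegrable _ _
  have hφia : IntervalIntegrable φ volume a (a+1) := by
    rw [intervalIntegrable_iff_integrableOn_Ioc_of_le hab]
    exact hΦ.mono_set (fun v hv => lt_of_le_of_lt ha hv.1)
  have hφpos : ∀ y : ℝ, 0 < c*y+d → 0 ≤ φ y := by
    intro y hy
    have h1 : (0:ℝ) ≤ (c*y+d)^(δ-1) := rpow_nonneg hy.le _
    have h2 : (0:ℝ) ≤ (c*y+d)^(δ+1) := rpow_nonneg hy.le _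
    have h3 := (exp_pos (-2*(c*y+d)^2*t)).le
    have h4 : (0:ℝ) ≤ 4*t := by linarith
    apply mul_nonneg hc.le
    exact add_nonneg (mul_nonneg (mul_nonneg hδ h1) h3) (mul_nonneg (mul_nonneg h4 h2) h3)
  -- main pointwise bound
  have hC : ∀ x ∈ Ioc a (a+1), |f (a+1) - f x| ≤ ∫ y in a..(a+1), φ y := by
    intro x hx
    have hx0 : 0 < x := lt_of_le_of_lt ha hx.1
    have hxb : x ≤ a + 1 := hx.2
    have hub : ∀ y ∈ Icc x (a+1), 0 < c*y+d := by
      intro y hy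
      have := mul_pos hc (lt_of_lt_of_le hx0 hy.1)
      linarith
    set F' := fun y : ℝ => c * (δ * (c*y+d)^(δ-1) * exp (-2*(c*y+d)^2*t))
        - c * (4*t*(c*y+d)^(δ+1) * exp (-2*(c*y+d)^2*t)) with hF'
    have hderiv : ∀ y ∈ uIcc x (a+1), HasDerivAt f (F' y) y := by
      intro y hy
      rw [uIcc_of_le hxb] at hy
      exact deriv_f (hub y hy)
    have hcont' : ContinuousOn F' (uIcc x (a+1)) := by
      rw [uIcc_of_le hxb]
      have hE : ContinuousOn (fun y : ℝ => exp (-2*(c*y+d)^2*t)) (Icc x (a+1)) :=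
        (Real.continuous_exp.comp (by continuity)).continuousOn
      have h1 : ContinuousOn (fun y : ℝ => (c*y+d)^(δ-1)) (Icc x (a+1)) :=
        ContinuousOn.rpow_const (by fun_prop) (fun y hy => Or.inl (hub y hy).ne')
      have h2 : ContinuousOn (fun y : ℝ => (c*y+d)^(δ+1)) (Icc x (a+1)) :=
        ContinuousOn.rpow_const (by fun_prop) (fun y hy => Or.inl (hub y hy).ne')
      exact (continuousOn_const.mul ((continuousOn_const.mul h1).mul hE)).sub
        (continuousOn_const.mul ((continuousOn_const.mul h2).mul hE))
    have hint : IntervalIntegrable F' volume x (a+1) := hcont'.intervalIntegrable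
    have hFTC := intervalIntegral.integral_eq_sub_of_hasDerivAt hderiv hint
    have hφix : IntervalIntegrable φ volume x (a+1) := by
      rw [intervalIntegrable_iff_integrableOn_Ioc_of_le hxb]
      exact hΦ.mono_set (fun v hv => lt_trans hx0 hv.1)
    have habs : ∀ y ∈ Icc x (a+1), |F' y| ≤ φ y := by
      intro y hy
      have hb := hub y hy
      have h1 : (0:ℝ) ≤ c * (δ * (c*y+d)^(δ-1) * exp (-2*(c*y+d)^2*t)) :=
        mul_nonneg hc.le (mul_nonneg (mul_nonneg hδ (rpow_nonneg hb.le _)) (exp_pos _).le)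
      have h2 : (0:ℝ) ≤ c * (4*t*(c*y+d)^(δ+1) * exp (-2*(c*y+d)^2*t)) :=
        mul_nonneg hc.le (mul_nonneg (mul_nonneg (by linarith) (rpow_nonneg hb.le _)) (exp_pos _).le)
      calc |F' y| ≤ |c * (δ * (c*y+d)^(δ-1) * exp (-2*(c*y+d)^2*t))|
              + |c * (4*t*(c*y+d)^(δ+1) * exp (-2*(c*y+d)^2*t))| := abs_sub _ _
        _ = φ y := by rw [abs_of_nonneg h1, abs_of_nonneg h2, hφdef]; ring
    calc |f (a+1) - f x| = |∫ y in x..(a+1), F' y| := by rw [hFTC]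
      _ ≤ ∫ y in x..(a+1), |F' y| := intervalIntegral.abs_integral_le_integral_abs hxb
      _ ≤ ∫ y in x..(a+1), φ y := by
          refine intervalIntegral.integral_mono_on hxb hint.abs hφix habs
      _ ≤ ∫ y in a..(a+1), φ y := by
          refine intervalIntegral.integral_mono_interval (le_of_lt hx.1) hxb le_rfl ?_ hφia
          filter_upwards [ae_restrict_mem measurableSet_Ioc] with y hy
          exact hφpos y (by nlinarith [hy.1, mul_pos hc (lt_of_le_of_lt ha hy.1)])
  -- assemble
  have key1 : f (a+1) - ∫ x in a..(a+1), f x = ∫ x in a..(a+1), (f (a+1) - f x) := by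
    rw [intervalIntegral.integral_sub (intervalIntegrable_const) hfi,
      intervalIntegral.integral_const]
    simp
  have h2 := intervalIntegral.norm_integral_le_of_norm_le_const
      (C := ∫ y in a..(a+1), φ y) (f := fun x => f (a+1) - f x) (a := a) (b := a+1) ?_
  · rw [← key1] at h2
    have : |a + 1 - a| = 1 := by simp
    rw [this, mul_one] at h2
    rw [← intervalIntegral.integral_of_le hab, ← intervalIntegral.integral_of_le hab]
    exact h2
  · intro x hx
    rw [uIoc_of_le hab] at hx
    exact hC x hx


lemma key {c d δ t : ℝ} (hc : 0 < c) (hd : 0 ≤ d) (hδ : 0 ≤ δ) (ht : 0 < t) (ht1 : t < 1) :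
    |(∑' k : ℕ, (c * ((k : ℝ) + 1) + d) ^ δ * Real.exp (-2 * (c * ((k : ℝ) + 1) + d) ^ 2 * t))
        - (2 * t) ^ (-(δ + 1) / 2) / (2 * c) * Real.Gamma ((δ + 1) / 2)|
      ≤ (2 * Gamma (δ/2 + 1) + c⁻¹ * (d ^ δ * d)) * t ^ (-δ / 2) := by
  -- basic integrabilities
  have hδ' : (-1:ℝ) < δ := by linarith
  have hg_int0 : IntegrableOn (fun v : ℝ => v^δ * exp (-2*v^2*t)) (Ioi 0) := moment_int ht hδ'
  have hg_intd : IntegrableOn (fun v : ℝ => v^δ * exp (-2*v^2*t)) (Ioi d) :=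
    hg_int0.mono_set (Ioi_subset_Ioi hd)
  have hf_int : IntegrableOn (fun x : ℝ => (c*x+d)^δ * exp (-2*(c*x+d)^2*t)) (Ioi 0) := by
    have := integrableOn_affine hc hg_intd
    exact this
  have hφv1 : IntegrableOn (fun v : ℝ => δ*v^(δ-1)*exp (-2*v^2*t)) (Ioi 0) := by
    rcases eq_or_lt_of_le hδ with h | h
    · have : (fun v : ℝ => δ*v^(δ-1)*exp (-2*v^2*t)) = fun _ => (0:ℝ) := by
        funext v; rw [← h]; ring
      rw [this]; exact integrableOn_zero
    · have := (moment_int ht (show (-1:ℝ) < δ-1 by linarith)).const_mul δ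
      exact MeasureTheory.IntegrableOn.congr_fun this (fun v _ => by ring) measurableSet_Ioi
  have hφv2 : IntegrableOn (fun v : ℝ => 4*t*v^(δ+1)*exp (-2*v^2*t)) (Ioi 0) := by
    have := (moment_int ht (show (-1:ℝ) < δ+1 by linarith)).const_mul (4*t)
    exact MeasureTheory.IntegrableOn.congr_fun this (fun v _ => by ring) measurableSet_Ioi
  have hφv_int : IntegrableOn
      (fun v : ℝ => δ*v^(δ-1)*exp (-2*v^2*t) + 4*t*v^(δ+1)*exp (-2*v^2*t)) (Ioi 0) :=
    hφv1.add hφv2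
  have hφ_int : IntegrableOn (fun x : ℝ => c*(δ*(c*x+d)^(δ-1)*exp (-2*(c*x+d)^2*t)
      + 4*t*(c*x+d)^(δ+1)*exp (-2*(c*x+d)^2*t))) (Ioi 0) := by
    have h1 := (integrableOn_affine hc (hφv_int.mono_set (Ioi_subset_Ioi hd))).const_mul c
    exact MeasureTheory.IntegrableOn.congr_fun h1 (fun v _ => by ring) measurableSet_Ioi
  -- HasSum identities
  have hSf : HasSum (fun k : ℕ => ∫ x in Ioc ((k:ℝ)) ((k:ℝ)+1), (c*x+d)^δ * exp (-2*(c*x+d)^2*t))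
      (∫ x in Ioi (0:ℝ), (c*x+d)^δ * exp (-2*(c*x+d)^2*t)) := by
    have h := hasSum_integral_iUnion (fun k : ℕ => measurableSet_Ioc) disj_Ioc
      (by rw [union_Ioc]; exact hf_int)
    rwa [union_Ioc] at h
  have hSφ : HasSum (fun k : ℕ => ∫ x in Ioc ((k:ℝ)) ((k:ℝ)+1),
        c*(δ*(c*x+d)^(δ-1)*exp (-2*(c*x+d)^2*t) + 4*t*(c*x+d)^(δ+1)*exp (-2*(c*x+d)^2*t)))
      (∫ x in Ioi (0:ℝ),
        c*(δ*(c*x+d)^(δ-1)*exp (-2*(c*x+d)^2*t) + 4*t*(c*x+d)^(δ+1)*exp (-2*(c*x+d)^2*t))) := by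
    have h := hasSum_integral_iUnion (fun k : ℕ => measurableSet_Ioc) disj_Ioc
      (by rw [union_Ioc]; exact hφ_int)
    rwa [union_Ioc] at h
  -- per-interval bounds (proved in interval_bound)
  have hbnd : ∀ k : ℕ, |(c*((k:ℝ)+1)+d)^δ * exp (-2*(c*((k:ℝ)+1)+d)^2*t)
      - ∫ x in Ioc ((k:ℝ)) ((k:ℝ)+1), (c*x+d)^δ * exp (-2*(c*x+d)^2*t)|
      ≤ ∫ x in Ioc ((k:ℝ)) ((k:ℝ)+1), c*(δ*(c*x+d)^(δ-1)*exp (-2*(c*x+d)^2*t)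
          + 4*t*(c*x+d)^(δ+1)*exp (-2*(c*x+d)^2*t)) :=
    fun k => interval_bound hc hd hδ ht hφ_int k
  have habs_sum : Summable (fun k : ℕ => |(c*((k:ℝ)+1)+d)^δ * exp (-2*(c*((k:ℝ)+1)+d)^2*t)
      - ∫ x in Ioc ((k:ℝ)) ((k:ℝ)+1), (c*x+d)^δ * exp (-2*(c*x+d)^2*t)|) :=
    Summable.of_nonneg_of_le (fun k => abs_nonneg _) hbnd hSφ.summable
  have hdiff_sum := habs_sum.of_abs
  have hf_sum : Summable (fun k : ℕ => (c*((k:ℝ)+1)+d)^δ * exp (-2*(c*((k:ℝ)+1)+d)^2*t)) := by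
    have h := hdiff_sum.add hSf.summable
    simpa using h
  have htsum : (∑' k : ℕ, (c*((k:ℝ)+1)+d)^δ * exp (-2*(c*((k:ℝ)+1)+d)^2*t))
      - (∫ x in Ioi (0:ℝ), (c*x+d)^δ * exp (-2*(c*x+d)^2*t))
      = ∑' k : ℕ, ((c*((k:ℝ)+1)+d)^δ * exp (-2*(c*((k:ℝ)+1)+d)^2*t)
          - ∫ x in Ioc ((k:ℝ)) ((k:ℝ)+1), (c*x+d)^δ * exp (-2*(c*x+d)^2*t)) := by
    rw [← hSf.tsum_eq]
    exact (Summable.tsum_sub hf_sum hSf.summable).symm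
  have hstep1 : |(∑' k : ℕ, (c*((k:ℝ)+1)+d)^δ * exp (-2*(c*((k:ℝ)+1)+d)^2*t))
      - ∫ x in Ioi (0:ℝ), (c*x+d)^δ * exp (-2*(c*x+d)^2*t)|
      ≤ ∫ x in Ioi (0:ℝ), c*(δ*(c*x+d)^(δ-1)*exp (-2*(c*x+d)^2*t)
          + 4*t*(c*x+d)^(δ+1)*exp (-2*(c*x+d)^2*t)) := by
    rw [htsum]
    calc |∑' k : ℕ, ((c*((k:ℝ)+1)+d)^δ * exp (-2*(c*((k:ℝ)+1)+d)^2*t)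
          - ∫ x in Ioc ((k:ℝ)) ((k:ℝ)+1), (c*x+d)^δ * exp (-2*(c*x+d)^2*t))|
        ≤ ∑' k : ℕ, |(c*((k:ℝ)+1)+d)^δ * exp (-2*(c*((k:ℝ)+1)+d)^2*t)
          - ∫ x in Ioc ((k:ℝ)) ((k:ℝ)+1), (c*x+d)^δ * exp (-2*(c*x+d)^2*t)| := by
          have h := norm_tsum_le_tsum_norm (by simpa using habs_sum :
            Summable fun k : ℕ => ‖(c*((k:ℝ)+1)+d)^δ * exp (-2*(c*((k:ℝ)+1)+d)^2*t)
              - ∫ x in Ioc ((k:ℝ)) ((k:ℝ)+1), (c*x+d)^δ * exp (-2*(c*x+d)^2*t)‖)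
          simpa using h
      _ ≤ ∑' k : ℕ, ∫ x in Ioc ((k:ℝ)) ((k:ℝ)+1), c*(δ*(c*x+d)^(δ-1)*exp (-2*(c*x+d)^2*t)
            + 4*t*(c*x+d)^(δ+1)*exp (-2*(c*x+d)^2*t)) :=
          Summable.tsum_le_tsum hbnd habs_sum hSφ.summable
      _ = _ := hSφ.tsum_eq
  -- value of the main integral
  have hA : ∫ x in Ioi (0:ℝ), (c*x+d)^δ * exp (-2*(c*x+d)^2*t)
      = c⁻¹ * ∫ v in Ioi d, v^δ * exp (-2*v^2*t) := by
    exact integral_affine hc d (fun v => v^δ * exp (-2*v^2*t))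
  have hmomδ := moment_eq ht hδ'
  have hsplit : ∫ v in Ioi (0:ℝ), v^δ * exp (-2*v^2*t)
      = (∫ v in Ioc (0:ℝ) d, v^δ * exp (-2*v^2*t)) + ∫ v in Ioi d, v^δ * exp (-2*v^2*t) := by
    rw [← Set.Ioc_union_Ioi_eq_Ioi hd]
    exact setIntegral_union (Set.Ioc_disjoint_Ioi le_rfl) measurableSet_Ioi
      (hg_int0.mono_set Set.Ioc_subset_Ioi_self) hg_intd
  have hR0 : 0 ≤ ∫ v in Ioc (0:ℝ) d, v^δ * exp (-2*v^2*t) :=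
    setIntegral_nonneg measurableSet_Ioc fun v hv =>
      mul_nonneg (rpow_nonneg (le_of_lt hv.1) _) (exp_pos _).le
  have hR1 : ∫ v in Ioc (0:ℝ) d, v^δ * exp (-2*v^2*t) ≤ d^δ * d := by
    calc ∫ v in Ioc (0:ℝ) d, v^δ * exp (-2*v^2*t) ≤ ∫ _ in Ioc (0:ℝ) d, d^δ := by
          refine setIntegral_mono_on (hg_int0.mono_set Set.Ioc_subset_Ioi_self)
            (integrableOn_const ?_) measurableSet_Ioc ?_
          · rw [Real.volume_Ioc]; exact ENNReal.ofReal_ne_top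
          · intro v hv
            have h1 : v^δ ≤ d^δ := rpow_le_rpow (le_of_lt hv.1) hv.2 hδ
            have h2 : exp (-2*v^2*t) ≤ 1 := by
              rw [exp_le_one_iff]
              nlinarith [sq_nonneg v]
            have := mul_le_mul h1 h2 (exp_pos _).le (rpow_nonneg hd δ)
            simpa using this
      _ = d^δ * d := by
          rw [setIntegral_const]
          simp [Real.volume_Ioc, ENNReal.toReal_ofReal hd, mul_comm, max_eq_left hd]
  have hAG : |(∫ x in Ioi (0:ℝ), (c*x+d)^δ * exp (-2*(c*x+d)^2*t))
      - (2 * t) ^ (-(δ + 1) / 2) / (2 * c) * Gamma ((δ + 1) / 2)| ≤ c⁻¹ * (d^δ * d) := by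
    rw [hA]
    have hint_d : ∫ v in Ioi d, v^δ * exp (-2*v^2*t)
        = (2*t) ^ (-(δ+1)/2) * (1/2) * Gamma ((δ+1)/2)
          - ∫ v in Ioc (0:ℝ) d, v^δ * exp (-2*v^2*t) := by
      rw [← hmomδ]; linarith [hsplit]
    rw [hint_d]
    have heq : c⁻¹ * ((2*t) ^ (-(δ+1)/2) * (1/2) * Gamma ((δ+1)/2)
          - ∫ v in Ioc (0:ℝ) d, v^δ * exp (-2*v^2*t))
        - (2 * t) ^ (-(δ + 1) / 2) / (2 * c) * Gamma ((δ + 1) / 2)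
        = -(c⁻¹ * ∫ v in Ioc (0:ℝ) d, v^δ * exp (-2*v^2*t)) := by
      field_simp
      ring
    rw [heq, abs_neg, abs_of_nonneg (mul_nonneg (inv_pos.2 hc).le hR0)]
    exact mul_le_mul_of_nonneg_left hR1 (inv_pos.2 hc).le
  -- bound on the φ integral
  have hΓpos : 0 < Gamma (δ/2 + 1) := Gamma_pos_of_pos (by linarith)
  have hΦval : ∫ x in Ioi (0:ℝ), c*(δ*(c*x+d)^(δ-1)*exp (-2*(c*x+d)^2*t)
        + 4*t*(c*x+d)^(δ+1)*exp (-2*(c*x+d)^2*t))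
      ≤ 2*(2*t)^(-δ/2)*Gamma (δ/2+1) := by
    have h0 : ∫ x in Ioi (0:ℝ), c*(δ*(c*x+d)^(δ-1)*exp (-2*(c*x+d)^2*t)
          + 4*t*(c*x+d)^(δ+1)*exp (-2*(c*x+d)^2*t))
        = ∫ v in Ioi d, (δ*v^(δ-1)*exp (-2*v^2*t) + 4*t*v^(δ+1)*exp (-2*v^2*t)) := by
      rw [MeasureTheory.integral_const_mul,
        integral_affine hc d (fun v => δ*v^(δ-1)*exp (-2*v^2*t) + 4*t*v^(δ+1)*exp (-2*v^2*t)),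
        ← mul_assoc, mul_inv_cancel₀ hc.ne', one_mul]
    rw [h0]
    have hsub : ∫ v in Ioi d, (δ*v^(δ-1)*exp (-2*v^2*t) + 4*t*v^(δ+1)*exp (-2*v^2*t))
        ≤ ∫ v in Ioi (0:ℝ), (δ*v^(δ-1)*exp (-2*v^2*t) + 4*t*v^(δ+1)*exp (-2*v^2*t)) := by
      refine setIntegral_mono_set hφv_int ?_ (HasSubset.Subset.eventuallyLE (Ioi_subset_Ioi hd))
      filter_upwards [ae_restrict_mem measurableSet_Ioi] with v hv
      have hv0 : (0:ℝ) ≤ v := le_of_lt hv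
      have h1 : (0:ℝ) ≤ v^(δ-1) := rpow_nonneg hv0 _
      have h2 : (0:ℝ) ≤ v^(δ+1) := rpow_nonneg hv0 _
      have h3 := (exp_pos (-2*v^2*t)).le
      have h4 : (0:ℝ) ≤ 4*t := by linarith
      exact add_nonneg (mul_nonneg (mul_nonneg hδ h1) h3) (mul_nonneg (mul_nonneg h4 h2) h3)
    refine le_trans hsub ?_
    rw [MeasureTheory.integral_add hφv1 hφv2]
    have hterm2 : ∫ v in Ioi (0:ℝ), 4*t*v^(δ+1)*exp (-2*v^2*t) = (2*t)^(-δ/2) * Gamma (δ/2+1) := by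
      have h := moment_eq ht (show (-1:ℝ) < δ+1 by linarith)
      have h1 : ∫ v in Ioi (0:ℝ), 4*t*v^(δ+1)*exp (-2*v^2*t)
          = (4*t) * ∫ v in Ioi (0:ℝ), v^(δ+1)*exp (-2*v^2*t) := by
        rw [← MeasureTheory.integral_const_mul]
        exact setIntegral_congr_fun measurableSet_Ioi (fun v _ => by ring)
      rw [h1, h, show -(δ+1+1)/2 = -δ/2 + (-1) by ring, rpow_add (by positivity), rpow_neg_one,
        show (δ+1+1)/2 = δ/2+1 by ring]
      field_simp
      ring
    have hterm1 : ∫ v in Ioi (0:ℝ), δ*v^(δ-1)*exp (-2*v^2*t) ≤ (2*t)^(-δ/2) * Gamma (δ/2+1) := by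
      rcases eq_or_lt_of_le hδ with h | h
      · have hz : (fun v : ℝ => δ*v^(δ-1)*exp (-2*v^2*t)) = fun _ => (0:ℝ) := by
          funext v; rw [← h]; ring
        rw [hz]
        simp only [integral_zero]
        positivity
      · have h1 : ∫ v in Ioi (0:ℝ), δ*v^(δ-1)*exp (-2*v^2*t)
            = δ * ∫ v in Ioi (0:ℝ), v^(δ-1)*exp (-2*v^2*t) := by
          rw [← MeasureTheory.integral_const_mul]
          exact setIntegral_congr_fun measurableSet_Ioi (fun v _ => by ring)
        rw [h1, moment_eq ht (show (-1:ℝ) < δ-1 by linarith),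
          show -(δ-1+1)/2 = -δ/2 by ring, show (δ-1+1)/2 = δ/2 by ring,
          Real.Gamma_add_one (show δ/2 ≠ 0 by positivity)]
        apply le_of_eq
        ring
    linarith
  have hΦ2 : ∫ x in Ioi (0:ℝ), c*(δ*(c*x+d)^(δ-1)*exp (-2*(c*x+d)^2*t)
        + 4*t*(c*x+d)^(δ+1)*exp (-2*(c*x+d)^2*t))
      ≤ 2*Gamma (δ/2+1) * t^(-δ/2) := by
    refine le_trans hΦval ?_
    have h1 : (2*t)^(-δ/2 : ℝ) = 2^(-δ/2 : ℝ) * t^(-δ/2 : ℝ) :=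
      mul_rpow (by norm_num) ht.le
    have h2 : (2:ℝ)^(-δ/2 : ℝ) ≤ 1 :=
      rpow_le_one_of_one_le_of_nonpos one_le_two (by linarith)
    have h3 : (0:ℝ) ≤ t^(-δ/2 : ℝ) := rpow_nonneg ht.le _
    rw [h1]
    nlinarith [mul_le_mul_of_nonneg_right h2 (mul_nonneg h3 hΓpos.le)]
  -- final assembly
  have htp : 1 ≤ t^(-δ/2 : ℝ) :=
    one_le_rpow_of_pos_of_le_one_of_nonpos ht ht1.le (by linarith)
  have htri := abs_sub_le
    (∑' k : ℕ, (c*((k:ℝ)+1)+d)^δ * exp (-2*(c*((k:ℝ)+1)+d)^2*t))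
    (∫ x in Ioi (0:ℝ), (c*x+d)^δ * exp (-2*(c*x+d)^2*t))
    ((2 * t) ^ (-(δ + 1) / 2) / (2 * c) * Gamma ((δ + 1) / 2))
  have hd2 : 0 ≤ c⁻¹ * (d^δ * d) :=
    mul_nonneg (inv_pos.2 hc).le (mul_nonneg (rpow_nonneg hd _) hd)
  nlinarith [mul_nonneg hd2 (sub_nonneg.2 htp)]


end Stmt14

/-- Asymptotics of the theta-like sum `Σ_{k=1}^∞ (ck+d)^δ e^{−2(ck+d)²t}` as `t → 0⁺`. -/
theorem stmt14 (c d δ : ℝ) (hc : 0 < c) (hd : 0 ≤ d) (hδ : 0 ≤ δ) :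
    ∃ M t₀ : ℝ, 0 < M ∧ 0 < t₀ ∧ ∀ t : ℝ, 0 < t → t < t₀ →
      |(∑' k : ℕ, (c * ((k : ℝ) + 1) + d) ^ δ *
            Real.exp (-2 * (c * ((k : ℝ) + 1) + d) ^ 2 * t))
          - (2 * t) ^ (-(δ + 1) / 2) / (2 * c) * Real.Gamma ((δ + 1) / 2)|
        ≤ M * t ^ (-δ / 2) := by
  refine ⟨2 * Real.Gamma (δ/2 + 1) + c⁻¹ * (d ^ δ * d), 1, ?_, one_pos, ?_⟩
  · have hΓ : 0 < Real.Gamma (δ/2 + 1) := Real.Gamma_pos_of_pos (by linarith)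
    have h2 : 0 ≤ c⁻¹ * (d ^ δ * d) :=
      mul_nonneg (inv_pos.2 hc).le (mul_nonneg (Real.rpow_nonneg hd _) hd)
    linarith
  · intro t ht ht1
    exact Stmt14.key hc hd hδ ht ht1
end

section
/- Let d ≥ 0 be a real number. Then, as t → 0⁺, Σ_{k=1}^{∞} (2k+d)^{−1} e^{−2(2k+d)² t} = O(log(1/t)); that is, there exist constants M, t₀ > 0 such that for all 0 < t < t₀, Σ_{k=1}^{∞} (2k+d)^{−1} e^{−2(2k+d)² t} ≤ M log(1/t). -/
open Real

set_option maxHeartbeats 1000000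

/-- The theta-like sum `Σ_{k=1}^∞ (2k+d)^{−1} e^{−2(2k+d)²t}` is `O(log(1/t))` as `t → 0⁺`. -/
theorem stmt15 (d : ℝ) (hd : 0 ≤ d) :
    ∃ M t₀ : ℝ, 0 < M ∧ 0 < t₀ ∧ ∀ t : ℝ, 0 < t → t < t₀ →
      (∑' k : ℕ, (2 * ((k : ℝ) + 1) + d)⁻¹ *
          Real.exp (-2 * (2 * ((k : ℝ) + 1) + d) ^ 2 * t))
        ≤ M * Real.log (1 / t) := by
  refine ⟨1, Real.exp (-4), one_pos, Real.exp_pos _, fun t ht ht₀ => ?_⟩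
  set f : ℕ → ℝ := fun k => (2 * ((k : ℝ) + 1) + d)⁻¹ *
      Real.exp (-2 * (2 * ((k : ℝ) + 1) + d) ^ 2 * t) with hf
  have ht1 : t < 1 := ht₀.trans ((Real.exp_lt_one_iff).2 (by norm_num))
  have hL : (4 : ℝ) < Real.log (1 / t) := by
    rw [Real.lt_log_iff_exp_lt (by positivity)]
    have h1 : t * Real.exp 4 < Real.exp (-4) * Real.exp 4 :=
      mul_lt_mul_of_pos_right ht₀ (Real.exp_pos 4)
    rw [← Real.exp_add] at h1
    norm_num at h1
    rw [one_div, inv_eq_one_div, lt_div_iff₀ ht]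
    linarith
  -- basic positivity of coefficients
  have ha : ∀ k : ℕ, 2 * ((k : ℝ) + 1) ≤ 2 * ((k : ℝ) + 1) + d := fun k => by linarith
  have hapos : ∀ k : ℕ, (0 : ℝ) < 2 * ((k : ℝ) + 1) + d := fun k => by positivity
  have hfpos : ∀ k : ℕ, 0 ≤ f k := fun k => by
    simp only [hf]; positivity
  -- summability
  have hgeo : Summable (fun k : ℕ => (1 / 2) * Real.exp (-8 * t) ^ k) :=
    (summable_geometric_of_lt_one (Real.exp_pos _).le
      ((Real.exp_lt_one_iff).2 (by linarith))).mul_left _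
  have hsum : Summable f := by
    refine Summable.of_nonneg_of_le hfpos ?_ hgeo
    · intro k
      simp only [hf]
      have h1 : (2 * ((k : ℝ) + 1) + d)⁻¹ ≤ 1 / 2 := by
        rw [inv_le_comm₀ (hapos k) (by norm_num)] at *
        · linarith [ha k, (Nat.cast_nonneg k : (0:ℝ) ≤ k)]
      have h2 : Real.exp (-2 * (2 * ((k : ℝ) + 1) + d) ^ 2 * t) ≤ Real.exp (-8 * t) ^ k := by
        rw [← Real.exp_nat_mul, Real.exp_le_exp]
        have : 4 * (k : ℝ) ≤ (2 * ((k : ℝ) + 1) + d) ^ 2 := by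
          nlinarith [(Nat.cast_nonneg k : (0:ℝ) ≤ k), sq_nonneg ((k : ℝ) + 1)]
        nlinarith
      exact mul_le_mul h1 h2 (Real.exp_pos _).le (by norm_num)
  set N : ℕ := ⌈1 / Real.sqrt t⌉₊ with hN
  have hst : 0 < Real.sqrt t := Real.sqrt_pos.2 ht
  have hst1 : Real.sqrt t ≤ 1 := by
    rw [show (1:ℝ) = Real.sqrt 1 by simp]
    exact Real.sqrt_le_sqrt ht1.le
  have hN1 : 1 ≤ N := by
    rw [hN, Nat.one_le_ceil_iff]
    positivity
  have hNge : 1 / Real.sqrt t ≤ (N : ℝ) := Nat.le_ceil _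
  have hNle : (N : ℝ) ≤ 2 / Real.sqrt t := by
    calc (N : ℝ) ≤ 1 / Real.sqrt t + 1 := (Nat.ceil_lt_add_one (by positivity)).le
    _ ≤ 2 / Real.sqrt t := by
        rw [div_add' _ _ _ hst.ne', div_le_div_iff₀ hst hst]
        nlinarith
  have hNsq : 1 / t ≤ (N : ℝ) ^ 2 := by
    have := mul_le_mul hNge hNge (by positivity) (Nat.cast_nonneg N)
    calc 1 / t = (1 / Real.sqrt t) * (1 / Real.sqrt t) := by
          rw [div_mul_div_comm, one_mul, Real.mul_self_sqrt ht.le]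
    _ ≤ (N : ℝ) * N := this
    _ = (N : ℝ) ^ 2 := (sq (N:ℝ)).symm
  -- split the sum
  rw [← Summable.sum_add_tsum_nat_add N hsum]
  -- head estimate
  have head : ∑ i ∈ Finset.range N, f i ≤ 1 / 2 * (1 + Real.log N) := by
    have h1 : ∑ i ∈ Finset.range N, f i ≤ ∑ i ∈ Finset.range N, (1/2) * ((i : ℝ) + 1)⁻¹ := by
      apply Finset.sum_le_sum
      intro i _
      simp only [hf]
      calc (2 * ((i : ℝ) + 1) + d)⁻¹ * Real.exp (-2 * (2 * ((i : ℝ) + 1) + d) ^ 2 * t)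
          ≤ (2 * ((i : ℝ) + 1) + d)⁻¹ * 1 := by
            apply mul_le_mul_of_nonneg_left _ (inv_nonneg.2 (hapos i).le)
            rw [Real.exp_le_one_iff]
            nlinarith [sq_nonneg (2 * ((i : ℝ) + 1) + d), ht]
      _ = (2 * ((i : ℝ) + 1) + d)⁻¹ := mul_one _
      _ ≤ (2 * ((i : ℝ) + 1))⁻¹ := by
          apply inv_anti₀ (by positivity) (ha i)
      _ = (1/2) * ((i : ℝ) + 1)⁻¹ := by
          rw [mul_inv]; ring
    rw [← Finset.mul_sum] at h1
    have h2 : ∑ i ∈ Finset.range N, ((i : ℝ) + 1)⁻¹ = ((harmonic N : ℚ) : ℝ) := by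
      rw [harmonic]
      push_cast
      rfl
    have h3 := harmonic_le_one_add_log N
    rw [h2] at h1
    calc ∑ i ∈ Finset.range N, f i ≤ 1/2 * ((harmonic N : ℚ) : ℝ) := h1
    _ ≤ 1/2 * (1 + Real.log N) := by linarith
  -- tail estimate
  have tail : ∑' i : ℕ, f (i + N) ≤ 1 / 16 := by
    apply Real.tsum_le_of_sum_range_le (fun i => hfpos _)
    intro n
    set w : ℕ → ℝ := fun i => (1 / (16 * t)) * ((i : ℝ) + N)⁻¹ ^ 2 with hw
    have key : ∀ i, f (i + N) ≤ w i - w (i + 1) := by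
      intro i
      have hm : (1 : ℝ) ≤ (i : ℝ) + N := by
        have : (1 : ℝ) ≤ (N : ℝ) := by exact_mod_cast hN1
        linarith [(Nat.cast_nonneg i : (0:ℝ) ≤ i)]
      set m : ℝ := (i : ℝ) + N with hmm
      have hmpos : 0 < m := by linarith
      have hb : 2 * (m + 1) ≤ 2 * (((i + N : ℕ) : ℝ) + 1) + d := by
        push_cast; linarith
      set b : ℝ := 2 * (((i + N : ℕ) : ℝ) + 1) + d with hbb
      have hbpos : (0 : ℝ) < b := hapos _
      have hb2 : 2 * (m + 1) ≤ b := hb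
      -- exp(-x) ≤ 1/x
      have hexp : Real.exp (-2 * b ^ 2 * t) ≤ (2 * b ^ 2 * t)⁻¹ := by
        have hx : 0 < 2 * b ^ 2 * t := by positivity
        rw [show -2 * b ^ 2 * t = -(2 * b ^ 2 * t) by ring, Real.exp_neg,
          inv_le_inv₀ (Real.exp_pos _) hx]
        linarith [Real.add_one_le_exp (2 * b ^ 2 * t)]
      have step1 : f (i + N) ≤ (2 * b ^ 3 * t)⁻¹ := by
        simp only [hf, ← hbb]
        calc b⁻¹ * Real.exp (-2 * b ^ 2 * t) ≤ b⁻¹ * (2 * b ^ 2 * t)⁻¹ :=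
              mul_le_mul_of_nonneg_left hexp (by positivity)
        _ = (2 * b ^ 3 * t)⁻¹ := by
            rw [← mul_inv]; ring_nf
      have step2 : (2 * b ^ 3 * t)⁻¹ ≤ w i - w (i + 1) := by
        have hwi : w i - w (i + 1) = (1 / (16 * t)) * ((2 * m + 1) / (m ^ 2 * (m + 1) ^ 2)) := by
          simp only [hw]
          push_cast
          rw [← hmm, show ((i : ℝ) + 1 + N) = m + 1 by rw [hmm]; ring]
          field_simp
          ring
        rw [hwi]
        rw [inv_le_iff_one_le_mul₀ (by positivity)]
        have hbc : 8 * (m + 1) ^ 3 ≤ b ^ 3 := by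
          calc 8 * (m + 1) ^ 3 = (2 * (m + 1)) ^ 3 := by ring
          _ ≤ b ^ 3 := pow_le_pow_left₀ (by positivity) hb2 3
        have hkey : 8 * (m ^ 2 * (m + 1) ^ 2) ≤ (2 * m + 1) * b ^ 3 := by
          have e1 : m ^ 2 ≤ (2 * m + 1) * (m + 1) := by nlinarith
          have e2 := mul_le_mul_of_nonneg_left e1
            (show (0:ℝ) ≤ 8 * (m + 1) ^ 2 by positivity)
          have e3 : (2 * m + 1) * (8 * (m + 1) ^ 3) ≤ (2 * m + 1) * b ^ 3 :=
            mul_le_mul_of_nonneg_left hbc (by linarith)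
          nlinarith [e2, e3]
        have hX : (0 : ℝ) < m ^ 2 * (m + 1) ^ 2 := by positivity
        calc (1 : ℝ) = (8 * (m ^ 2 * (m + 1) ^ 2)) / (8 * (m ^ 2 * (m + 1) ^ 2)) := by
              field_simp
        _ ≤ ((2 * m + 1) * b ^ 3) / (8 * (m ^ 2 * (m + 1) ^ 2)) := by
              apply div_le_div_of_nonneg_right hkey ?_ |>.trans_eq rfl
              · positivity
        _ = 1 / (16 * t) * ((2 * m + 1) / (m ^ 2 * (m + 1) ^ 2)) * (2 * b ^ 3 * t) := by
              field_simp
              ring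
      exact step1.trans step2
    calc ∑ i ∈ Finset.range n, f (i + N) ≤ ∑ i ∈ Finset.range n, (w i - w (i + 1)) :=
          Finset.sum_le_sum (fun i _ => key i)
    _ = w 0 - w n := Finset.sum_range_sub' w n
    _ ≤ w 0 := by
        have : 0 ≤ w n := by simp only [hw]; positivity
        linarith
    _ = (1 / (16 * t)) * ((N : ℝ)⁻¹ ^ 2) := by simp [hw]
    _ ≤ 1 / 16 := by
        rw [inv_pow]
        have hNpos : (0 : ℝ) < N := by exact_mod_cast hN1
        have : ((N : ℝ) ^ 2)⁻¹ ≤ t := by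
          rw [inv_le_iff_one_le_mul₀ (by positivity)]
          calc (1 : ℝ) = (1 / t) * t := by field_simp
          _ ≤ (N : ℝ) ^ 2 * t := by nlinarith
          _ = t * (N : ℝ) ^ 2 := by ring
        calc (1 / (16 * t)) * ((N : ℝ) ^ 2)⁻¹ ≤ (1 / (16 * t)) * t := by
              apply mul_le_mul_of_nonneg_left this (by positivity)
        _ = 1 / 16 := by field_simp
  -- log N estimate
  have hlogN : Real.log N ≤ Real.log 2 + (1 / 2) * Real.log (1 / t) := by
    have hNpos : (0 : ℝ) < N := by exact_mod_cast hN1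
    calc Real.log N ≤ Real.log (2 / Real.sqrt t) := Real.log_le_log hNpos hNle
    _ = Real.log 2 - Real.log (Real.sqrt t) := Real.log_div (by norm_num) hst.ne'
    _ = Real.log 2 - Real.log t / 2 := by rw [Real.log_sqrt ht.le]
    _ = Real.log 2 + (1 / 2) * Real.log (1 / t) := by
          rw [one_div t, Real.log_inv]; ring
  have hlog2 : Real.log 2 ≤ 1 := by
    linarith [Real.log_le_sub_one_of_pos (by norm_num : (0:ℝ) < 2)]
  calc ∑ i ∈ Finset.range N, f i + ∑' i : ℕ, f (i + N)
      ≤ 1 / 2 * (1 + Real.log N) + 1 / 16 := by linarith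
  _ ≤ 1 / 2 * (1 + (Real.log 2 + (1/2) * Real.log (1 / t))) + 1 / 16 := by linarith
  _ ≤ 1 * Real.log (1 / t) := by linarith
end
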